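/- Let X = {0,1}^ℕ be the Cantor space with the product topology (each factor {0,1} discrete), and define ζ : X → ℝ by ζ(x) = ∑_{n=1}^∞ 2^{−n} x_n. Then ζ is continuous, and ζ is not locally constant: for every x ∈ X and every neighbourhood U of x, ζ is not constant on U. Consequently ζ ∈ C_c(X, ℝ) does not lie in the image of the canonical comparison map Φ_X : C_c(X, ℤ) ⊗_ℤ ℝ → C_c(X, ℝ), so Φ_X is not surjective. (Example 3.2.5.) -/

import Mathlib

open scoped CompactlySupported
open Set Function

variable (X A : Type*) [TopologicalSpace X]
  [AddCommGroup A] [TopologicalSpace A] [IsTopologicalAddGroup A]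

/-- The bilinear map `(f, a) ↦ (x ↦ f x • a)` from `C_c(X, ℤ) × A` to `C_c(X, A)`. -/
noncomputable def ccSmulBilin :
    C_c(X, ℤ) →ₗ[ℤ] A →ₗ[ℤ] C_c(X, A) where
  toFun f :=
    { toFun := fun a =>
        { toFun := fun x => f x • a
          continuous_toFun := by
            exact (continuous_of_discreteTopology (f := fun n : ℤ => n • a)).comp f.continuous
          hasCompactSupport' := by
            have h := f.hasCompactSupport.comp_left (g := fun n : ℤ => n • a) (zero_smul ℤ a)
            exact h
      }
      map_add' := fun a b => by
        ext x
        exact smul_add (f x) a b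
      map_smul' := fun z a => by
        ext x
        exact smul_comm (f x) z a }
  map_add' f g := by
    ext a x
    exact add_smul (f x) (g x) a
  map_smul' z f := by
    ext a x
    exact mul_smul z (f x) a

/-- The canonical comparison map `Φ_X : C_c(X, ℤ) ⊗_ℤ A → C_c(X, A)`, the unique additive
map with `Φ_X (f ⊗ a) x = f x • a`. -/
noncomputable def ccComparison :
    TensorProduct ℤ C_c(X, ℤ) A →ₗ[ℤ] C_c(X, A) :=
  TensorProduct.lift (ccSmulBilin X A)

/-- The function `ζ : {0,1}^ℕ → ℝ`, `ζ x = ∑_{n ≥ 1} 2^{-n} x_n` (here indexed so that the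
`n`-th coordinate, `n : ℕ`, contributes `2^{-(n+1)}`). -/
noncomputable def cantorZeta : (ℕ → Bool) → ℝ :=
  fun x => ∑' n : ℕ, (2 : ℝ)⁻¹ ^ (n + 1) * (if x n then 1 else 0)

lemma geo_summable : Summable (fun n : ℕ => (2 : ℝ)⁻¹ ^ (n + 1)) := by
  simpa [pow_succ'] using (summable_geometric_of_lt_one (by norm_num : (0:ℝ) ≤ 2⁻¹)
      (by norm_num : (2:ℝ)⁻¹ < 1)).mul_left 2⁻¹

lemma cz_le (x : ℕ → Bool) (n : ℕ) :
    (2 : ℝ)⁻¹ ^ (n + 1) * (if x n then 1 else 0) ≤ (2 : ℝ)⁻¹ ^ (n + 1) := by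
  by_cases h : x n <;> simp [h]

lemma cz_nonneg (x : ℕ → Bool) (n : ℕ) :
    0 ≤ (2 : ℝ)⁻¹ ^ (n + 1) * (if x n then 1 else 0) := by
  by_cases h : x n <;> simp [h]

lemma cz_summable (x : ℕ → Bool) :
    Summable (fun n : ℕ => (2 : ℝ)⁻¹ ^ (n + 1) * (if x n then 1 else 0)) :=
  Summable.of_nonneg_of_le (cz_nonneg x) (cz_le x) geo_summable

lemma cz_continuous : Continuous cantorZeta := by
  unfold cantorZeta
  apply continuous_tsum (u := fun n : ℕ => (2 : ℝ)⁻¹ ^ (n + 1))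
  · intro n
    exact (continuous_of_discreteTopology
      (f := fun b : Bool => (2 : ℝ)⁻¹ ^ (n + 1) * (if b then 1 else 0))).comp (continuous_apply n)
  · exact geo_summable
  · intro n x
    rw [Real.norm_eq_abs, abs_of_nonneg (cz_nonneg x n)]
    exact cz_le x n

lemma cz_flip (x : ℕ → Bool) (n : ℕ) :
    cantorZeta (Function.update x n (!x n)) ≠ cantorZeta x := by
  have hs1 := cz_summable (Function.update x n (!x n))
  have hs2 := cz_summable x
  have hdiff : cantorZeta (Function.update x n (!x n)) - cantorZeta x
      = ∑' k : ℕ, ((2 : ℝ)⁻¹ ^ (k + 1) * (if Function.update x n (!x n) k then 1 else 0)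
        - (2 : ℝ)⁻¹ ^ (k + 1) * (if x k then 1 else 0)) := (Summable.tsum_sub hs1 hs2).symm
  have hsingle : (∑' k : ℕ, ((2 : ℝ)⁻¹ ^ (k + 1) * (if Function.update x n (!x n) k then 1 else 0)
        - (2 : ℝ)⁻¹ ^ (k + 1) * (if x k then 1 else 0)))
      = (2 : ℝ)⁻¹ ^ (n + 1) * (if !x n then 1 else 0)
        - (2 : ℝ)⁻¹ ^ (n + 1) * (if x n then 1 else 0) := by
    rw [tsum_eq_single n]
    · simp
    · intro k hk
      simp [Function.update_of_ne hk]
  intro h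
  rw [h, sub_self] at hdiff
  rw [hsingle] at hdiff
  have hp : (0:ℝ) < (2 : ℝ)⁻¹ ^ (n + 1) := by positivity
  by_cases hb : x n <;> simp [hb] at hdiff <;> nlinarith [hdiff, pow_pos (by norm_num : (0:ℝ)<2) (n+1)]


/-- **Example 3.2.5.** On the Cantor space `X = {0,1}^ℕ`, the function
`ζ x = ∑_n 2^{-(n+1)} x_n` is continuous but not locally constant; consequently it does
not lie in the image of the canonical comparison map `Φ_X : C_c(X, ℤ) ⊗_ℤ ℝ → C_c(X, ℝ)`,
and `Φ_X` is not surjective. -/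
theorem cantorZeta_not_in_range :
    Continuous cantorZeta ∧
    (∀ x : ℕ → Bool, ∀ U ∈ nhds x, ¬ (∀ y ∈ U, cantorZeta y = cantorZeta x)) ∧
    (∀ g : C_c((ℕ → Bool), ℝ), ⇑g = cantorZeta →
      ∀ z : TensorProduct ℤ C_c((ℕ → Bool), ℤ) ℝ, ccComparison (ℕ → Bool) ℝ z ≠ g) ∧
    ¬ Function.Surjective (ccComparison (ℕ → Bool) ℝ) := by
  have hcont := cz_continuous
  have hnlc : ∀ x : ℕ → Bool, ∀ U ∈ nhds x, ¬ (∀ y ∈ U, cantorZeta y = cantorZeta x) := by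
    intro x U hU hconst
    have ht : Filter.Tendsto (fun n => Function.update x n (!x n)) Filter.atTop (nhds x) := by
      rw [tendsto_pi_nhds]
      intro i
      apply tendsto_const_nhds.congr'
      filter_upwards [Filter.eventually_gt_atTop i] with n hn
      exact (Function.update_of_ne hn.ne (!x n) x).symm
    obtain ⟨n, hn⟩ := (ht.eventually_mem hU).exists
    exact cz_flip x n (hconst _ hn)
  have hlc : ∀ z : TensorProduct ℤ C_c((ℕ → Bool), ℤ) ℝ,
      IsLocallyConstant ⇑(ccComparison (ℕ → Bool) ℝ z) := by
    intro z
    induction z using TensorProduct.induction_on with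
    | zero =>
        rw [map_zero]
        exact IsLocallyConstant.of_constant _ (fun _ _ => rfl)
    | tmul f a =>
        have hf : IsLocallyConstant ⇑f := (IsLocallyConstant.iff_continuous _).mpr f.continuous
        exact hf.comp (fun n : ℤ => n • a)
    | add u v hu hv =>
        rw [map_add]
        exact hu.comp₂ hv (· + ·)
  have key : ∀ g : C_c((ℕ → Bool), ℝ), ⇑g = cantorZeta →
      ∀ z : TensorProduct ℤ C_c((ℕ → Bool), ℤ) ℝ, ccComparison (ℕ → Bool) ℝ z ≠ g := by
    intro g hg z hz
    have hzeta : IsLocallyConstant cantorZeta := by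
      rw [← hg, ← hz]; exact hlc z
    obtain ⟨U, hUo, hxU, hUc⟩ := hzeta.exists_open (fun _ => false)
    exact hnlc _ U (hUo.mem_nhds hxU) hUc
  refine ⟨hcont, hnlc, key, ?_⟩
  intro hs
  obtain ⟨z, hz⟩ := hs ⟨⟨cantorZeta, hcont⟩, isClosed_closure.isCompact⟩
  exact key _ rfl z hz
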